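/- arXiv:1403.6445 — 3 statements merged into one kernel-verified Lean document; each statement's English description precedes it below -/
import Mathlib

section
/- For s ∈ [0,1), define f_s : (0,1) → ℝ by f_s(r) = (1/√(1−s²)) · (r/√(r²−s²)) · 𝟙_{(s,1)}(r). Then for every h ∈ (0,1), the family (f_s)_{0 ≤ s ≤ 1−h} is uniformly bounded in L^{3/2}(0,1); that is, sup_{0 ≤ s ≤ 1−h} ∫₀¹ f_s(r)^{3/2} dr < ∞. -/
open MeasureTheory

theorem stmt_6 (h : ℝ) (hh : h ∈ Set.Ioo (0:ℝ) 1) :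
    ∃ M : ℝ, ∀ s ∈ Set.Icc (0:ℝ) (1 - h),
      (∫ r in (0:ℝ)..1,
        (if s < r then r / (Real.sqrt (1 - s^2) * Real.sqrt (r^2 - s^2)) else 0) ^ (3/2 : ℝ))
        ≤ M := by
  obtain ⟨hh0, hh1⟩ := hh
  refine ⟨h ^ (-(3/4):ℝ) * 4, ?_⟩
  rintro s ⟨hs0, hs1⟩
  have hs1' : s ≤ 1 := by linarith
  set F : ℝ → ℝ := fun r =>
    (if s < r then r / (Real.sqrt (1 - s^2) * Real.sqrt (r^2 - s^2)) else 0) ^ (3/2 : ℝ)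
    with hFdef
  set G : ℝ → ℝ := fun r => h ^ (-(3/4):ℝ) * (r - s) ^ (-(3/4):ℝ) with hGdef
  have hhs : h ≤ 1 - s^2 := by nlinarith
  -- pointwise bound on [s,1]
  have hFG : ∀ r ∈ Set.Icc s 1, F r ≤ G r := by
    rintro r ⟨hr1, hr2⟩
    rcases eq_or_lt_of_le hr1 with rfl | hsr
    · simp [hFdef, hGdef, Real.zero_rpow]
    · have hr0 : 0 < r := lt_of_le_of_lt hs0 hsr
      have hrs : 0 < r - s := by linarith
      have hx : (0:ℝ) < h * (r - s) := mul_pos hh0 hrs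
      simp only [hFdef, hGdef, if_pos hsr]
      have hA : 0 < Real.sqrt (1 - s^2) := Real.sqrt_pos.2 (by nlinarith)
      have hB : 0 < Real.sqrt (r^2 - s^2) := Real.sqrt_pos.2 (by nlinarith)
      have hbase : 0 ≤ r / (Real.sqrt (1 - s^2) * Real.sqrt (r^2 - s^2)) :=
        div_nonneg hr0.le (mul_nonneg hA.le hB.le)
      have key : r / (Real.sqrt (1 - s^2) * Real.sqrt (r^2 - s^2))
          ≤ (h * (r - s)) ^ (-(1/2):ℝ) := by
        have h1 : (h * (r - s)) ^ (-(1/2):ℝ) = (Real.sqrt (h * (r - s)))⁻¹ := by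
          rw [Real.sqrt_eq_rpow, ← Real.rpow_neg hx.le]
        rw [h1]
        rw [div_le_iff₀ (mul_pos hA hB), inv_mul_eq_div, le_div_iff₀ (Real.sqrt_pos.2 hx)]
        have e1 : Real.sqrt (1 - s^2) * Real.sqrt (r^2 - s^2)
            = Real.sqrt ((1 - s^2) * (r^2 - s^2)) :=
          (Real.sqrt_mul (by nlinarith) _).symm
        have e2 : r * Real.sqrt (h * (r - s)) = Real.sqrt (r^2 * (h * (r - s))) := by
          rw [Real.sqrt_mul (sq_nonneg r), Real.sqrt_sq hr0.le]
        rw [e1, e2]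
        apply Real.sqrt_le_sqrt
        have h2 : 0 ≤ r + s - r^2 := by nlinarith
        nlinarith [mul_nonneg (mul_nonneg (show (0:ℝ) ≤ 1 - s^2 by nlinarith) hrs.le) h2,
          mul_nonneg (show (0:ℝ) ≤ (1 - s^2) - h by linarith)
            (mul_nonneg (sq_nonneg r) hrs.le)]
      calc (r / (Real.sqrt (1 - s^2) * Real.sqrt (r^2 - s^2))) ^ (3/2:ℝ)
          ≤ ((h * (r - s)) ^ (-(1/2):ℝ)) ^ (3/2:ℝ) :=
            Real.rpow_le_rpow hbase key (by norm_num)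
        _ = (h * (r - s)) ^ (-(3/4):ℝ) := by
            rw [← Real.rpow_mul hx.le]; norm_num
        _ = h ^ (-(3/4):ℝ) * (r - s) ^ (-(3/4):ℝ) :=
            Real.mul_rpow hh0.le hrs.le
  -- measurability
  have hFmeas : Measurable F := by
    apply (Real.continuous_rpow_const (by norm_num : (0:ℝ) ≤ 3/2)).measurable.comp
    apply Measurable.ite (measurableSet_lt measurable_const measurable_id) _ measurable_const
    fun_prop
  -- integrability of G on s..1
  have hGint : IntervalIntegrable G volume s 1 := by
    have h1 : IntervalIntegrable (fun x : ℝ => x ^ (-(3/4):ℝ)) volume 0 (1 - s) :=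
      intervalIntegral.intervalIntegrable_rpow' (by norm_num)
    have h2 := (h1.comp_sub_right s).const_mul (h ^ (-(3/4):ℝ))
    simpa using h2
  -- nonnegativity of F
  have hFnn : ∀ r, 0 ≤ F r := by
    intro r
    by_cases hr : s < r
    · simp only [hFdef, if_pos hr]
      exact Real.rpow_nonneg (div_nonneg (le_of_lt (lt_of_le_of_lt hs0 hr))
        (mul_nonneg (Real.sqrt_nonneg _) (Real.sqrt_nonneg _))) _
    · simp [hFdef, if_neg hr, Real.zero_rpow]
  -- integrability of F on s..1
  have hFint : IntervalIntegrable F volume s 1 := by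
    apply hGint.mono_fun hFmeas.aestronglyMeasurable
    filter_upwards [ae_restrict_mem measurableSet_uIoc] with r hr
    rw [Set.uIoc_of_le hs1'] at hr
    have hle : F r ≤ G r := hFG r ⟨hr.1.le, hr.2⟩
    rw [Real.norm_eq_abs, Real.norm_eq_abs, abs_of_nonneg (hFnn r)]
    exact hle.trans (le_abs_self _)
  -- F vanishes on [0,s]
  have hF0 : Set.EqOn F 0 (Set.uIcc 0 s) := by
    intro r hr
    rw [Set.uIcc_of_le hs0] at hr
    simp [hFdef, not_lt.2 hr.2, Real.zero_rpow]
  have hFint0 : IntervalIntegrable F volume 0 s := by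
    apply (intervalIntegrable_const (c := (0:ℝ))).mono_fun hFmeas.aestronglyMeasurable
    filter_upwards [ae_restrict_mem measurableSet_uIoc] with r hr
    have : F r = 0 := hF0 (Set.uIoc_subset_uIcc hr)
    simp [this]
  -- compute the G integral
  have hGval : ∫ r in s..1, G r ≤ h ^ (-(3/4):ℝ) * 4 := by
    have e1 : ∫ r in s..1, G r
        = h ^ (-(3/4):ℝ) * ∫ r in s..1, (r - s) ^ (-(3/4):ℝ) := by
      simp [hGdef, intervalIntegral.integral_const_mul]
    have e2 : ∫ r in s..1, (r - s) ^ (-(3/4):ℝ)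
        = ∫ x in (0:ℝ)..(1 - s), x ^ (-(3/4):ℝ) := by
      have := intervalIntegral.integral_comp_sub_right (a := s) (b := 1)
        (fun x : ℝ => x ^ (-(3/4):ℝ)) s
      simpa using this
    have e3 : ∫ x in (0:ℝ)..(1 - s), x ^ (-(3/4):ℝ)
        = 4 * (1 - s) ^ ((1/4):ℝ) := by
      rw [integral_rpow (Or.inl (by norm_num))]
      rw [Real.zero_rpow (by norm_num)]
      norm_num
      ring
    have hle : (1 - s) ^ ((1/4):ℝ) ≤ 1 :=
      Real.rpow_le_one (by linarith) (by linarith) (by norm_num)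
    have hpos : 0 ≤ h ^ (-(3/4):ℝ) := Real.rpow_nonneg hh0.le _
    rw [e1, e2, e3]
    nlinarith [Real.rpow_nonneg (show (0:ℝ) ≤ 1 - s by linarith) ((1/4):ℝ)]
  calc ∫ r in (0:ℝ)..1, F r
      = (∫ r in (0:ℝ)..s, F r) + ∫ r in s..1, F r :=
        (intervalIntegral.integral_add_adjacent_intervals hFint0 hFint).symm
    _ = ∫ r in s..1, F r := by
        rw [intervalIntegral.integral_congr hF0]; simp
    _ ≤ ∫ r in s..1, G r :=
        intervalIntegral.integral_mono_on hs1' hFint hGint hFG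
    _ ≤ h ^ (-(3/4):ℝ) * 4 := hGval
end

section
/- Let g : (0,1] → ℝ be defined by g(y) = √(1−y²) − log((1+√(1−y²))/y). Then g is increasing on (0,1], g(1) = 0, g(y) < 0 for y ∈ (0,1), and as h → 0⁺, g(1−h) = −(2√2/3) h^{3/2} + o(h^{3/2}). -/
open Asymptotics Topology

/-- The function appearing in Kapteyn's inequality. -/
noncomputable def gKapteyn (y : ℝ) : ℝ :=
  Real.sqrt (1 - y^2) - Real.log ((1 + Real.sqrt (1 - y^2)) / y)


lemma gK_eq {y : ℝ} (hy : 0 < y) :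
    gKapteyn y = Real.sqrt (1 - y^2) - Real.log (1 + Real.sqrt (1 - y^2)) + Real.log y := by
  have h1 : (0:ℝ) < 1 + Real.sqrt (1 - y^2) := by positivity
  rw [gKapteyn, Real.log_div h1.ne' hy.ne']
  ring

lemma gK_hasDeriv {y : ℝ} (hy : y ∈ Set.Ioo (0:ℝ) 1) :
    HasDerivAt gKapteyn (Real.sqrt (1 - y^2) / y) y := by
  obtain ⟨hy0, hy1⟩ := hy
  have hsq : (0:ℝ) < 1 - y^2 := by nlinarith
  set s := Real.sqrt (1 - y^2) with hs
  have hs0 : 0 < s := Real.sqrt_pos.2 hsq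
  have hs2 : s^2 = 1 - y^2 := Real.sq_sqrt hsq.le
  have h1 : HasDerivAt (fun x : ℝ => 1 - x^2) (-(2*y)) y := by
    simpa using ((hasDerivAt_pow 2 y).const_sub 1)
  have h2 : HasDerivAt (fun x : ℝ => Real.sqrt (1 - x^2)) (-(2*y) / (2*s)) y :=
    h1.sqrt hsq.ne'
  have h3 : HasDerivAt (fun x : ℝ => Real.log (1 + Real.sqrt (1 - x^2)))
      ((-(2*y) / (2*s)) / (1 + s)) y := by
    exact (h2.const_add 1).log (by positivity)
  have h4 : HasDerivAt Real.log y⁻¹ y := Real.hasDerivAt_log hy0.ne'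
  have h5 := (h2.sub h3).add h4
  have heq : gKapteyn =ᶠ[𝓝 y] fun x =>
      Real.sqrt (1 - x^2) - Real.log (1 + Real.sqrt (1 - x^2)) + Real.log x := by
    filter_upwards [Filter.Tendsto.eventually_const_lt hy0 (Filter.tendsto_id (α := ℝ) (x := 𝓝 y))]
      with x hx
    exact gK_eq hx
  have h6 : HasDerivAt gKapteyn (-(2*y) / (2*s) - -(2*y) / (2*s) / (1 + s) + y⁻¹) y :=
    h5.congr_of_eventuallyEq heq
  convert h6 using 1
  field_simp
  linear_combination s * hs2

lemma gK_cont : ContinuousOn gKapteyn (Set.Ioc (0:ℝ) 1) := by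
  have hc : Continuous fun y : ℝ => 1 + Real.sqrt (1 - y^2) := by
    continuity
  apply ContinuousOn.sub
  · exact (Real.continuous_sqrt.comp (by continuity)).continuousOn
  · apply ContinuousOn.log
    · exact (hc.continuousOn.div continuousOn_id fun y hy => hy.1.ne')
    · intro y hy
      have h0 : (0:ℝ) < 1 + Real.sqrt (1 - y^2) := by positivity
      exact (div_pos h0 hy.1).ne'

lemma gK_mono : StrictMonoOn gKapteyn (Set.Ioc (0:ℝ) 1) := by
  apply strictMonoOn_of_deriv_pos (convex_Ioc 0 1) gK_cont
  intro y hy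
  rw [interior_Ioc] at hy
  rw [(gK_hasDeriv hy).deriv]
  have h1 : (0:ℝ) < 1 - y^2 := by nlinarith [hy.1, hy.2]
  have := Real.sqrt_pos.2 h1
  exact div_pos this hy.1

lemma gK_one : gKapteyn 1 = 0 := by
  simp [gKapteyn]

lemma gK_neg : ∀ y ∈ Set.Ioo (0:ℝ) 1, gKapteyn y < 0 := by
  intro y hy
  have := gK_mono ⟨hy.1, hy.2.le⟩ ⟨one_pos, le_refl 1⟩ hy.2
  rwa [gK_one] at this

lemma cube_aux {h : ℝ} (h0 : 0 < h) (h8 : h ≤ 1/8) :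
    0 ≤ 2*Real.sqrt 2*(h*Real.sqrt h) - (Real.sqrt (2*h-h^2))^3 ∧
    2*Real.sqrt 2*(h*Real.sqrt h) - (Real.sqrt (2*h-h^2))^3 ≤ 6*h^2 := by
  have ha2 : (Real.sqrt 2)^2 = 2 := Real.sq_sqrt (by norm_num)
  have hb2 : (Real.sqrt (2-h))^2 = 2-h := Real.sq_sqrt (by linarith)
  have ha0 : 0 ≤ Real.sqrt 2 := Real.sqrt_nonneg _
  have hb0 : 0 ≤ Real.sqrt (2-h) := Real.sqrt_nonneg _
  have hba : Real.sqrt (2-h) ≤ Real.sqrt 2 := Real.sqrt_le_sqrt (by linarith)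
  have ha1 : 1 ≤ Real.sqrt 2 := by nlinarith [ha2, ha0]
  have hb1 : 1 ≤ Real.sqrt (2-h) := by nlinarith [hb2, hb0]
  have hrh : (Real.sqrt h)^2 = h := Real.sq_sqrt h0.le
  have hrh0 : 0 ≤ Real.sqrt h := Real.sqrt_nonneg _
  have hrh1 : Real.sqrt h ≤ 1 := by nlinarith [hrh, hrh0]
  have hseq : Real.sqrt (2*h-h^2) = Real.sqrt h * Real.sqrt (2-h) := by
    rw [show 2*h - h^2 = h * (2-h) by ring, Real.sqrt_mul h0.le]
  set a := Real.sqrt 2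
  set b := Real.sqrt (2-h)
  set r := Real.sqrt h
  have hcube0 : 0 ≤ a^3 - b^3 := by nlinarith [mul_nonneg ha0 hb0]
  have hab : (a-b)*(a+b) = h := by linear_combination ha2 - hb2
  have hable : a - b ≤ h/2 := by
    nlinarith [mul_nonneg (sub_nonneg.2 hba) (by linarith : (0:ℝ) ≤ a + b - 2), hab]
  have hsum : a^2 + a*b + b^2 ≤ 6 := by
    nlinarith [mul_le_mul_of_nonneg_left hba ha0, ha2, hb2]
  have hcube : a^3 - b^3 ≤ 6*h := by
    have key : a^3 - b^3 = (a-b)*(a^2+a*b+b^2) := by ring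
    have h6 : (0:ℝ) ≤ a^2+a*b+b^2 := by positivity
    rw [key]
    exact le_trans (mul_le_mul hable hsum h6 (by linarith)) (by linarith)
  have hdd : 2*a*(h*r) - (r*b)^3 = h * r * (a^3 - b^3) := by
    have ha3 : a^3 = 2*a := by nlinarith [ha2]
    linear_combination (-(h*r)) * ha3 - (b^3*r) * hrh
  rw [hseq, hdd]
  constructor
  · positivity
  · calc h * r * (a^3 - b^3) ≤ h * r * (6*h) :=
          mul_le_mul_of_nonneg_left hcube (by positivity)
      _ = 6*h^2*r := by ring
      _ ≤ 6*h^2*1 := mul_le_mul_of_nonneg_left hrh1 (by positivity)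
      _ = 6*h^2 := by ring

set_option maxHeartbeats 1000000 in
lemma key_bound {h : ℝ} (h0 : 0 < h) (h8 : h ≤ 1/8) :
    |gKapteyn (1-h) + (2*Real.sqrt 2/3) * (h * Real.sqrt h)| ≤ 9 * h^2 := by
  have hy0 : 0 < 1 - h := by linarith
  have hexp : 1 - (1-h)^2 = 2*h - h^2 := by ring
  set s := Real.sqrt (2*h - h^2) with hsdef
  have hsq : (0:ℝ) < 2*h - h^2 := by nlinarith
  have hs0 : 0 < s := Real.sqrt_pos.2 hsq
  have hs2 : s^2 = 2*h - h^2 := Real.sq_sqrt hsq.le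
  have hs_le : s ≤ 1/2 := by
    have h1 : s^2 ≤ (1/2:ℝ)^2 := by rw [hs2]; nlinarith
    nlinarith
  -- expression for gKapteyn (1-h)
  have hg : gKapteyn (1-h) = s - Real.log (1+s) + Real.log (1-h) := by
    rw [gK_eq hy0, hexp]
  -- Taylor remainders
  set e1 := (-s + s^2/2 - s^3/3 + s^4/4) + Real.log (1+s) with he1def
  set e2 := (h + h^2/2) + Real.log (1-h) with he2def
  have he1 : |e1| ≤ s^5/(1-s) := by
    have e := Real.abs_log_sub_add_sum_range_le (x := -s)
      (by rw [abs_neg, abs_of_nonneg hs0.le]; linarith) 4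
    simp [Finset.sum_range_succ, abs_neg, abs_of_nonneg hs0.le] at e
    rw [he1def]
    convert e using 2 <;> ring
  have he2 : |e2| ≤ h^3/(1-h) := by
    have e := Real.abs_log_sub_add_sum_range_le (x := h)
      (by rw [abs_of_nonneg h0.le]; linarith) 2
    simp [Finset.sum_range_succ, abs_of_nonneg h0.le] at e
    rw [he2def]
    convert e using 2 <;> ring
  have he1' : |e1| ≤ 4*h^2 := by
    refine he1.trans ?_
    rw [div_le_iff₀ (by linarith : (0:ℝ) < 1 - s)]
    have hs5 : s^5 = (s^2)^2 * s := by ring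
    nlinarith [hs2, hs_le, hs0.le, sq_nonneg h, sq_nonneg s]
  have he2' : |e2| ≤ h^2 := by
    refine he2.trans ?_
    rw [div_le_iff₀ (by linarith : (0:ℝ) < 1 - h)]
    nlinarith
  -- the cube term
  set d := 2*Real.sqrt 2*(h*Real.sqrt h) - s^3 with hddef
  have hd : 0 ≤ d ∧ d ≤ 6*h^2 := cube_aux h0 h8
  -- assemble
  have hF : gKapteyn (1-h) + (2*Real.sqrt 2/3) * (h * Real.sqrt h)
      = -e1 + e2 - h^2 + s^4/4 + d/3 := by
    rw [hg, he1def, he2def, hddef]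
    linear_combination (1/2) * hs2
  clear_value s e1 e2 d
  rw [hF, abs_le]
  have h1 := abs_le.1 he1'
  have h2 := abs_le.1 he2'
  have hs4 : s^4 ≤ 4*h^2 := by nlinarith [hs2]
  have hs4' : 0 ≤ s^4 := by positivity
  constructor <;> linarith [h1.1, h1.2, h2.1, h2.2, hd.1, hd.2, hs4, hs4', sq_nonneg h]

lemma rpow32 {h : ℝ} (h0 : 0 ≤ h) : h ^ (3/2:ℝ) = h * Real.sqrt h := by
  rw [show (3/2:ℝ) = 1 + 1/2 by norm_num, Real.rpow_add' h0 (by norm_num),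
    Real.rpow_one, ← Real.sqrt_eq_rpow]


theorem stmt_14 :
    StrictMonoOn gKapteyn (Set.Ioc (0:ℝ) 1) ∧
    gKapteyn 1 = 0 ∧
    (∀ y ∈ Set.Ioo (0:ℝ) 1, gKapteyn y < 0) ∧
    (fun h : ℝ => gKapteyn (1 - h) + (2 * Real.sqrt 2 / 3) * h ^ (3/2 : ℝ))
      =o[𝓝[>] (0:ℝ)] (fun h : ℝ => h ^ (3/2 : ℝ)) := by
  refine ⟨gK_mono, gK_one, gK_neg, ?_⟩
  rw [Asymptotics.isLittleO_iff]
  intro c hc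
  have hδ : (0:ℝ) < min (1/8) ((c/9)^2) := by positivity
  filter_upwards [Ioc_mem_nhdsGT_of_mem (α := ℝ) ⟨le_refl 0, hδ⟩] with h hh
  obtain ⟨h0, hle⟩ := hh
  have h8 : h ≤ 1/8 := hle.trans (min_le_left _ _)
  have hc9 : h ≤ (c/9)^2 := hle.trans (min_le_right _ _)
  have hr : h ^ (3/2:ℝ) = h * Real.sqrt h := rpow32 h0.le
  have hb := key_bound h0 h8
  have hs2 : Real.sqrt h ^ 2 = h := Real.sq_sqrt h0.le
  have hsh : Real.sqrt h ≤ c/9 := by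
    have := Real.sqrt_le_sqrt hc9
    rwa [Real.sqrt_sq (by positivity)] at this
  have h2 : 9*h^2 ≤ c * (h * Real.sqrt h) := by
    nlinarith [mul_le_mul_of_nonneg_left hsh (mul_nonneg h0.le (Real.sqrt_nonneg h)), hs2]
  rw [hr, Real.norm_eq_abs, Real.norm_eq_abs, abs_of_nonneg (by positivity : (0:ℝ) ≤ h * Real.sqrt h)]
  exact hb.trans h2
end

section
/- Let (X, μ) be a finite measure space, (g_j)_{j∈ℕ} nonnegative integrable functions, γ_j > 0, and J(a) = inf_j γ_j ∫ a g_j dμ for a ∈ 𝒰̄ = {a ∈ L^∞(X;[0,1]) : ∫ a dμ = c}. Suppose a* maximizes J over 𝒰̄ and there exists N₀ ∈ ℕ such that inf_{j > N₀} γ_j ∫ a* g_j dμ > γ₁ ∫ g₁ dμ and J_N(a) := inf_{1≤j≤N} γ_j ∫ a g_j dμ satisfies J_N(a) ≤ γ₁ ∫ g₁ dμ for all a ∈ 𝒰̄ (as holds when ∫ g₁ dμ bounds γ₁ ∫ a g₁). If a^{N₀} is the unique maximizer of J_{N₀} over 𝒰̄, then J(a*) = J_{N₀}(a*) = J_{N₀}(a^{N₀})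 = max_{a ∈ 𝒰̄} J(a); i.e. the truncated maximum equals the full maximum. -/
open MeasureTheory

/-- Admissible densities on a measure space: measurable, `[0,1]`-valued, fixed integral `c`. -/
def Adm {X : Type*} [MeasurableSpace X] (μ : Measure X) (c : ℝ) (a : X → ℝ) : Prop :=
  Measurable a ∧ (∀ x, a x ∈ Set.Icc (0:ℝ) 1) ∧ (∫ x, a x ∂μ) = c

/-- The full spectral criterion `J(a) = inf_j γ_j ∫ a g_j dμ`. -/
noncomputable def Jfull {X : Type*} [MeasurableSpace X] (μ : Measure X)
    (γ : ℕ+ → ℝ) (g : ℕ+ → X → ℝ) (a : X → ℝ) : ℝ :=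
  ⨅ j : ℕ+, γ j * ∫ x, a x * g j x ∂μ

/-- The truncated spectral criterion `J_N(a) = inf_{1 ≤ j ≤ N} γ_j ∫ a g_j dμ`. -/
noncomputable def Jtrunc {X : Type*} [MeasurableSpace X] (μ : Measure X)
    (γ : ℕ+ → ℝ) (g : ℕ+ → X → ℝ) (N : ℕ+) (a : X → ℝ) : ℝ :=
  ⨅ j : {j : ℕ+ // j ≤ N}, γ (j : ℕ+) * ∫ x, a x * g (j : ℕ+) x ∂μ

lemma adm_mul_integrable {X : Type*} [MeasurableSpace X] {μ : Measure X}
    {a : X → ℝ} (ha : Measurable a) (hb : ∀ x, a x ∈ Set.Icc (0:ℝ) 1)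
    {h : X → ℝ} (hh : Integrable h μ) : Integrable (fun x => a x * h x) μ :=
  Integrable.bdd_mul (c := 1) hh ha.aestronglyMeasurable (ae_of_all _ fun x => by
    rw [Real.norm_eq_abs, abs_le]; exact ⟨le_trans (by norm_num) (hb x).1, (hb x).2⟩)

theorem stmt_17 {X : Type*} [MeasurableSpace X] (μ : Measure X) [IsFiniteMeasure μ]
    (g : ℕ+ → X → ℝ) (hgnn : ∀ j x, 0 ≤ g j x) (hgint : ∀ j, Integrable (g j) μ)
    (γ : ℕ+ → ℝ) (hγ : ∀ j, 0 < γ j) (c : ℝ)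
    (astar : X → ℝ) (hastar : Adm μ c astar)
    (hmax : ∀ a, Adm μ c a → Jfull μ γ g a ≤ Jfull μ γ g astar)
    (N₀ : ℕ+)
    (htail : γ 1 * ∫ x, g 1 x ∂μ
      < ⨅ j : {j : ℕ+ // N₀ < j}, γ (j : ℕ+) * ∫ x, astar x * g (j : ℕ+) x ∂μ)
    (hbound : ∀ a, Adm μ c a → Jtrunc μ γ g N₀ a ≤ γ 1 * ∫ x, g 1 x ∂μ)
    (aN : X → ℝ) (haN : Adm μ c aN)
    (haNmax : ∀ a, Adm μ c a → Jtrunc μ γ g N₀ a ≤ Jtrunc μ γ g N₀ aN)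
    (haNuniq : ∀ a, Adm μ c a →
      (∀ b, Adm μ c b → Jtrunc μ γ g N₀ b ≤ Jtrunc μ γ g N₀ a) → a =ᵐ[μ] aN) :
    Jfull μ γ g astar = Jtrunc μ γ g N₀ astar ∧
    Jtrunc μ γ g N₀ astar = Jtrunc μ γ g N₀ aN ∧
    Jfull μ γ g astar = ⨆ a : {a : X → ℝ // Adm μ c a}, Jfull μ γ g (a : X → ℝ) := by
  haveI : Nonempty {j : ℕ+ // j ≤ N₀} := ⟨⟨1, N₀.one_le⟩⟩
  haveI : Nonempty {j : ℕ+ // N₀ < j} := ⟨⟨N₀ + 1, PNat.lt_add_right N₀ 1⟩⟩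
  haveI : Nonempty {a : X → ℝ // Adm μ c a} := ⟨astar, hastar⟩
  -- nonnegativity of every term
  have hterm : ∀ (a : X → ℝ), Adm μ c a → ∀ j : ℕ+,
      0 ≤ γ j * ∫ x, a x * g j x ∂μ := by
    intro a ha j
    exact mul_nonneg (hγ j).le (integral_nonneg fun x =>
      mul_nonneg (ha.2.1 x).1 (hgnn j x))
  have bddfull : ∀ (a : X → ℝ), Adm μ c a →
      BddBelow (Set.range fun j : ℕ+ => γ j * ∫ x, a x * g j x ∂μ) := by
    intro a ha
    exact ⟨0, by rintro y ⟨j, rfl⟩; exact hterm a ha j⟩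
  have bddtrunc : ∀ (a : X → ℝ), Adm μ c a →
      BddBelow (Set.range fun j : {j : ℕ+ // j ≤ N₀} =>
        γ (j : ℕ+) * ∫ x, a x * g (j : ℕ+) x ∂μ) := by
    intro a ha
    exact ⟨0, by rintro y ⟨j, rfl⟩; exact hterm a ha j⟩
  have bddtail : BddBelow (Set.range fun j : {j : ℕ+ // N₀ < j} =>
      γ (j : ℕ+) * ∫ x, astar x * g (j : ℕ+) x ∂μ) :=
    ⟨0, by rintro y ⟨j, rfl⟩; exact hterm astar hastar j⟩
  set T := ⨅ j : {j : ℕ+ // N₀ < j}, γ (j : ℕ+) * ∫ x, astar x * g (j : ℕ+) x ∂μ with hTdef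
  have hg1nn : 0 ≤ γ 1 * ∫ x, g 1 x ∂μ :=
    mul_nonneg (hγ 1).le (integral_nonneg fun x => hgnn 1 x)
  -- truncated inf of astar
  have hJs_le : Jtrunc μ γ g N₀ astar ≤ γ 1 * ∫ x, g 1 x ∂μ := hbound astar hastar
  have hJs_lt_T : Jtrunc μ γ g N₀ astar < T := lt_of_le_of_lt hJs_le htail
  -- Part 1 : Jfull astar = Jtrunc astar
  have h1 : Jfull μ γ g astar = Jtrunc μ γ g N₀ astar := by
    apply le_antisymm
    · exact le_ciInf fun j => ciInf_le (bddfull astar hastar) (j : ℕ+)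
    · apply le_ciInf
      intro j
      rcases le_or_gt j N₀ with hj | hj
      · exact ciInf_le (bddtrunc astar hastar) ⟨j, hj⟩
      · exact le_trans (le_trans hJs_le htail.le) (ciInf_le bddtail ⟨j, hj⟩)
  -- Part 2 : Jtrunc astar = Jtrunc aN
  have h2 : Jtrunc μ γ g N₀ astar = Jtrunc μ γ g N₀ aN := by
    refine le_antisymm (haNmax astar hastar) ?_
    by_contra hcon
    push_neg at hcon
    set Js := Jtrunc μ γ g N₀ astar with hJsdef
    set JN := Jtrunc μ γ g N₀ aN with hJNdef
    have hJsnn : 0 ≤ Js := le_ciInf fun j => hterm astar hastar j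
    have hTpos : 0 < T := lt_of_le_of_lt hg1nn htail
    set t : ℝ := (T - Js) / (2 * T) with htdef
    have ht0 : 0 < t := div_pos (by linarith) (by linarith)
    have ht1 : t < 1 := by
      rw [htdef, div_lt_one (by linarith)]; linarith
    set b : X → ℝ := fun x => (1 - t) * astar x + t * aN x with hbdef
    have hia : Integrable astar μ := by
      refine (integrable_const (1:ℝ)).mono' hastar.1.aestronglyMeasurable
        (ae_of_all _ fun x => ?_)
      rw [Real.norm_eq_abs, abs_le]
      exact ⟨by linarith [(hastar.2.1 x).1], (hastar.2.1 x).2⟩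
    have hib : Integrable aN μ := by
      refine (integrable_const (1:ℝ)).mono' haN.1.aestronglyMeasurable
        (ae_of_all _ fun x => ?_)
      rw [Real.norm_eq_abs, abs_le]
      exact ⟨by linarith [(haN.2.1 x).1], (haN.2.1 x).2⟩
    have hbadm : Adm μ c b := by
      refine ⟨(measurable_const.mul hastar.1).add (measurable_const.mul haN.1), ?_, ?_⟩
      · intro x
        obtain ⟨h01, h02⟩ := hastar.2.1 x
        obtain ⟨h11, h12⟩ := haN.2.1 x
        constructor
        · have : (0:ℝ) ≤ (1 - t) * astar x + t * aN x := by nlinarith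
          simpa [hbdef] using this
        · have : (1 - t) * astar x + t * aN x ≤ 1 := by nlinarith
          simpa [hbdef] using this
      · show (∫ x, (1 - t) * astar x + t * aN x ∂μ) = c
        rw [integral_add (hia.const_mul _) (hib.const_mul _), integral_const_mul,
          integral_const_mul, hastar.2.2, haN.2.2]
        ring
    have hbterm : ∀ j : ℕ+, γ j * ∫ x, b x * g j x ∂μ
        = (1 - t) * (γ j * ∫ x, astar x * g j x ∂μ)
          + t * (γ j * ∫ x, aN x * g j x ∂μ) := by
      intro j
      have hi1 : Integrable (fun x => astar x * g j x) μ :=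
        adm_mul_integrable hastar.1 hastar.2.1 (hgint j)
      have hi2 : Integrable (fun x => aN x * g j x) μ :=
        adm_mul_integrable haN.1 haN.2.1 (hgint j)
      have heq : (fun x => b x * g j x)
          = fun x => (1 - t) * (astar x * g j x) + t * (aN x * g j x) := by
        funext x; simp only [hbdef]; ring
      rw [heq, integral_add (hi1.const_mul _) (hi2.const_mul _), integral_const_mul,
        integral_const_mul]
      ring
    have key : min ((1 - t) * Js + t * JN) ((1 - t) * T) ≤ Jfull μ γ g b := by
      apply le_ciInf
      intro j
      rcases le_or_gt j N₀ with hj | hj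
      · refine le_trans (min_le_left _ _) ?_
        rw [hbterm j]
        have h1' : Js ≤ γ j * ∫ x, astar x * g j x ∂μ :=
          ciInf_le (bddtrunc astar hastar) ⟨j, hj⟩
        have h2' : JN ≤ γ j * ∫ x, aN x * g j x ∂μ :=
          ciInf_le (bddtrunc aN haN) ⟨j, hj⟩
        nlinarith
      · refine le_trans (min_le_right _ _) ?_
        rw [hbterm j]
        have h1' : T ≤ γ j * ∫ x, astar x * g j x ∂μ := ciInf_le bddtail ⟨j, hj⟩
        have h2' := hterm aN haN j
        nlinarith
    have hmin : Js < min ((1 - t) * Js + t * JN) ((1 - t) * T) := by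
      apply lt_min
      · nlinarith
      · have heq : (1 - t) * T = (T + Js) / 2 := by
          rw [htdef]; field_simp; ring
        rw [heq]; linarith
    have hle := hmax b hbadm
    rw [h1] at hle
    exact absurd (key.trans hle) (not_le.mpr hmin)
  -- Part 3
  have h3 : Jfull μ γ g astar
      = ⨆ a : {a : X → ℝ // Adm μ c a}, Jfull μ γ g (a : X → ℝ) := by
    apply le_antisymm
    · exact le_ciSup (f := fun a : {a : X → ℝ // Adm μ c a} => Jfull μ γ g (a : X → ℝ))
        ⟨Jfull μ γ g astar, by rintro y ⟨a, rfl⟩; exact hmax a a.2⟩ ⟨astar, hastar⟩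
    · exact ciSup_le fun a => hmax a a.2
  exact ⟨h1, h2, h3⟩
end
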